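/- Let A be a commutative ℚ-algebra and let t, h₁, h₂, h₃, h₄, h₅, h₆, h₇, h₈ ∈ A satisfy the eight equations: h₂ + (1/2)h₃ + t·h₁² = 0; h₄ + h₅ + t·h₁·h₂ = 0; h₅ + t·h₁·h₃ = 0; h₆ + h₇ − (1/2)t·h₁ + t·h₁·h₄ = 0; h₇ + t·h₁ + t·h₁·h₅ = 0; (1/2)h₈ + t·h₁ − (1/2)t·h₂ + (1/4)t·h₃ + t·h₁·h₆ = 0; h₈ + t·h₂ − (1/2)t·h₃ + t·h₁·h₇ = 0; −1 + h₃ + h₄ − (1/2)h₅ + h₁·h₈ = 0. Then t·(1 + h₁ + 6t·h₁² + 3t²·h₁³ − 2t³·h₁⁵ + 3t⁴·h₁⁶ + t⁶·h₁⁹) = 0. -/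
import Mathlib


/-- in a commutative `ℚ`-algebra, the nonlinear system (e:NL) satisfied by the
block-diagonalization data `h₁,…,h₈` of the local `(2,1)` flip implies the consistency
condition `t·F(h₁) = 0`, where `F(X) = 1 + X + 6tX² + 3t²X³ − 2t³X⁵ + 3t⁴X⁶ + t⁶X⁹`. -/
theorem keyPolynomial_consistency {A : Type*} [CommRing A] [Algebra ℚ A]
    (t h₁ h₂ h₃ h₄ h₅ h₆ h₇ h₈ : A)
    (e1 : h₂ + algebraMap ℚ A (1/2) * h₃ + t * h₁ ^ 2 = 0)
    (e2 : h₄ + h₅ + t * h₁ * h₂ = 0)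
    (e3 : h₅ + t * h₁ * h₃ = 0)
    (e4 : h₆ + h₇ - algebraMap ℚ A (1/2) * (t * h₁) + t * h₁ * h₄ = 0)
    (e5 : h₇ + t * h₁ + t * h₁ * h₅ = 0)
    (e6 : algebraMap ℚ A (1/2) * h₈ + t * h₁ - algebraMap ℚ A (1/2) * (t * h₂)
            + algebraMap ℚ A (1/4) * (t * h₃) + t * h₁ * h₆ = 0)
    (e7 : h₈ + t * h₂ - algebraMap ℚ A (1/2) * (t * h₃) + t * h₁ * h₇ = 0)
    (e8 : -1 + h₃ + h₄ - algebraMap ℚ A (1/2) * h₅ + h₁ * h₈ = 0) :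
    t * (1 + h₁ + 6 * t * h₁ ^ 2 + 3 * t ^ 2 * h₁ ^ 3 - 2 * t ^ 3 * h₁ ^ 5
          + 3 * t ^ 4 * h₁ ^ 6 + t ^ 6 * h₁ ^ 9) = 0 := by

  have h2a : algebraMap ℚ A (1/2) * 2 = 1 := by
    rw [← map_ofNat (algebraMap ℚ A) 2, ← map_mul, ← map_one (algebraMap ℚ A)]
    norm_num
  have h4a : algebraMap ℚ A (1/4) * 4 = 1 := by
    rw [← map_ofNat (algebraMap ℚ A) 4, ← map_mul, ← map_one (algebraMap ℚ A)]
    norm_num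
  have E1 : 2*h₂ + h₃ + 2*t*h₁^2 = 0 := by linear_combination 2*e1 + (-h₃)*h2a
  have E4 : 2*h₆ + 2*h₇ - t*h₁ + 2*t*h₁*h₄ = 0 := by linear_combination 2*e4 + (t*h₁)*h2a
  have E6 : 2*h₈ + 4*t*h₁ - 2*t*h₂ + t*h₃ + 4*t*h₁*h₆ = 0 := by
    linear_combination 4*e6 + (-2*h₈ + 2*t*h₂)*h2a + (-(t*h₃))*h4a
  have E7 : 2*h₈ + 2*t*h₂ - t*h₃ + 2*t*h₁*h₇ = 0 := by linear_combination 2*e7 + (t*h₃)*h2a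
  have E8 : -2 + 2*h₃ + 2*h₄ - h₅ + 2*h₁*h₈ = 0 := by linear_combination 2*e8 + h₅*h2a
  have H4 : 4 * (t * (1 + h₁ + 6 * t * h₁ ^ 2 + 3 * t ^ 2 * h₁ ^ 3 - 2 * t ^ 3 * h₁ ^ 5
          + 3 * t ^ 4 * h₁ ^ 6 + t ^ 6 * h₁ ^ 9)) = 0 := by
    linear_combination
      (2*t^6*h₁^7 + 4*t^4*h₁^4 - 2*t^3*h₁^3 + 2*t^2*h₁ + 2*t) * E1
      + (-(4*t^5*h₁^6) + 4*t^2*h₁^2 + 4*t) * e2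
      + (-(6*t) - 8*t^3*h₁^3 - 2*t^5*h₁^6 - 10*t^2*h₁^2) * e3
      + (2*t^4*h₁^5 - 6*t^2*h₁^2 - 2*t*h₁) * E4
      + (6*t^4*h₁^5 + 14*t^2*h₁^2 + 6*t*h₁) * e5
      + (-(t^3*h₁^4) + 3*t*h₁ + 1) * E6
      + (-(5*t^3*h₁^4) - t*h₁ - 1) * E7
      + (-(2*t) + 6*t^3*h₁^3) * E8
  linear_combination (algebraMap ℚ A (1/4)) * H4
    + (-(t * (1 + h₁ + 6 * t * h₁ ^ 2 + 3 * t ^ 2 * h₁ ^ 3 - 2 * t ^ 3 * h₁ ^ 5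
          + 3 * t ^ 4 * h₁ ^ 6 + t ^ 6 * h₁ ^ 9))) * h4a
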